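/- Let (T_n) be a sequence where T_n is an invertible n×n real matrix with positive entries satisfying t_{i,i} ≥ Σ_{j≠i} t_{i,j} for every row, with associated quantities m_n, M_n and diagonal matrix S_n with (S_n)_{i,i} = 1/(T_n)_{i,i}. If M_n/(m_n n) → 0 as n → ∞, then there exist a constant K > 0 and N such that for all n ≥ N, max_{i,j} |(T_n^{-1} − S_n)_{i,j}| ≤ K · M_n² / (m_n³ n²). -/

import Mathlib

open Finset


lemma helper_div (X a b : ℝ) (hX : 0 < X) (h : X * a ≤ X * b) : a ≤ b :=
  le_of_mul_le_mul_left h hX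

set_option maxHeartbeats 2000000 in
lemma core_bound (n : ℕ) (hn : 4 ≤ n) (t : Matrix (Fin n) (Fin n) ℝ) (m M β : ℝ)
    (hm : 0 < m) (hmM : m ≤ M) (hβ0 : 0 ≤ β)
    (hlo : ∀ i j, i ≠ j → m ≤ t i j) (hhi : ∀ i j, i ≠ j → t i j ≤ M)
    (hdom : ∀ i, ∑ j ∈ Finset.univ.erase i, t i j ≤ t i i)
    (hup : ∀ i, t i i ≤ (∑ j ∈ Finset.univ.erase i, t i j) + M)
    (x b : Fin n → ℝ)
    (heq : ∀ i, ∑ j, t i j * x j = b i)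
    (hb : ∀ i, |b i| ≤ β) :
    ∀ i, |x i| ≤ β/(((n:ℝ)-1)*m) + 3*(β/(((n:ℝ)-1)*m))*((n:ℝ)*M)/(((n:ℝ)-2)*m) := by
  have hn4 : (4:ℝ) ≤ (n:ℝ) := by exact_mod_cast hn
  have hn1 : (1:ℝ) ≤ (n:ℝ) - 1 := by linarith
  have hn2 : (2:ℝ) ≤ (n:ℝ) - 2 := by linarith
  have hM0 : 0 < M := lt_of_lt_of_le hm hmM
  have hnm : 0 < ((n:ℝ)-1)*m := by nlinarith
  set η : ℝ := β/(((n:ℝ)-1)*m) with hηdef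
  have hη0 : 0 ≤ η := by positivity
  -- basic facts
  have hcard : ∀ i : Fin n, ((Finset.univ.erase i).card : ℝ) = (n:ℝ) - 1 := by
    intro i
    rw [Finset.card_erase_of_mem (Finset.mem_univ i), Finset.card_univ, Fintype.card_fin]
    have : 1 ≤ n := by omega
    push_cast [Nat.cast_sub this]
    ring
  have hσlo : ∀ i : Fin n, ((n:ℝ)-1)*m ≤ ∑ j ∈ Finset.univ.erase i, t i j := by
    intro i
    have h1 : (Finset.univ.erase i).card • m ≤ ∑ j ∈ Finset.univ.erase i, t i j := by
      apply Finset.card_nsmul_le_sum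
      intro j hj
      exact hlo i j (Finset.ne_of_mem_erase hj).symm
    rw [nsmul_eq_mul] at h1
    calc ((n:ℝ)-1)*m = ((Finset.univ.erase i).card : ℝ) * m := by rw [hcard]
    _ ≤ _ := h1
  have hσhi : ∀ i : Fin n, ∑ j ∈ Finset.univ.erase i, t i j ≤ ((n:ℝ)-1)*M := by
    intro i
    have h1 : ∑ j ∈ Finset.univ.erase i, t i j ≤ ∑ j ∈ Finset.univ.erase i, M := by
      apply Finset.sum_le_sum
      intro j hj
      exact hhi i j (Finset.ne_of_mem_erase hj).symm
    rw [Finset.sum_const, nsmul_eq_mul, hcard] at h1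
    exact h1
  have hdlo : ∀ i : Fin n, ((n:ℝ)-1)*m ≤ t i i := fun i => le_trans (hσlo i) (hdom i)
  have hd0 : ∀ i : Fin n, 0 < t i i := fun i => lt_of_lt_of_le hnm (hdlo i)
  have hdhi : ∀ i : Fin n, t i i ≤ (n:ℝ)*M := by
    intro i
    have := hup i
    have := hσhi i
    nlinarith
  -- row identity
  have hrow : ∀ i : Fin n, t i i * x i + ∑ j ∈ Finset.univ.erase i, t i j * x j = b i := by
    intro i
    rw [← heq i]
    exact Finset.add_sum_erase Finset.univ (fun j => t i j * x j) (Finset.mem_univ i)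
  -- argmax and argmin
  have hne : (Finset.univ : Finset (Fin n)).Nonempty := ⟨⟨0, by omega⟩, Finset.mem_univ _⟩
  obtain ⟨A, -, hA⟩ := Finset.exists_max_image Finset.univ x hne
  obtain ⟨B, -, hB⟩ := Finset.exists_min_image Finset.univ x hne
  have hA' : ∀ j, x j ≤ x A := fun j => hA j (Finset.mem_univ j)
  have hB' : ∀ j, x B ≤ x j := fun j => hB j (Finset.mem_univ j)
  set p := x A with hpdef
  set q := x B with hqdef
  have hpq : q ≤ p := hB' A
  set ω := p - q with hωdef
  have hω0 : 0 ≤ ω := by simp [hωdef]; linarith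
  -- sums σ at A and B
  set σA := ∑ j ∈ Finset.univ.erase A, t A j with hσAdef
  set σB := ∑ j ∈ Finset.univ.erase B, t B j with hσBdef
  have hσA0 : 0 < σA := lt_of_lt_of_le hnm (hσlo A)
  have hσB0 : 0 < σB := lt_of_lt_of_le hnm (hσlo B)
  -- sums against x bounds
  have hSq : ∀ i : Fin n, (∑ j ∈ Finset.univ.erase i, t i j) * q ≤
      ∑ j ∈ Finset.univ.erase i, t i j * x j := by
    intro i
    rw [Finset.sum_mul]
    apply Finset.sum_le_sum
    intro j hj
    have ht0 : 0 ≤ t i j := le_of_lt (lt_of_lt_of_le hm (hlo i j (Finset.ne_of_mem_erase hj).symm))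
    exact mul_le_mul_of_nonneg_left (hB' j) ht0
  have hSp : ∀ i : Fin n, (∑ j ∈ Finset.univ.erase i, t i j * x j) ≤
      (∑ j ∈ Finset.univ.erase i, t i j) * p := by
    intro i
    rw [Finset.sum_mul]
    apply Finset.sum_le_sum
    intro j hj
    have ht0 : 0 ≤ t i j := le_of_lt (lt_of_lt_of_le hm (hlo i j (Finset.ne_of_mem_erase hj).symm))
    exact mul_le_mul_of_nonneg_left (hA' j) ht0
  have hηβ : η * (((n:ℝ)-1)*m) = β := div_mul_cancel₀ β (ne_of_gt hnm)
  -- level bounds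
  have hL1 : p ≤ η + ω := by
    have h1 : t A A * p + σA * q ≤ β := by
      have h2 := hrow A
      have h3 := hSq A
      have h4 := (abs_le.mp (hb A)).2
      rw [← hσAdef] at h3
      linarith
    have hq' : σA * q = σA * p - σA * ω := by rw [hωdef]; ring
    have h5 : (t A A + σA) * p ≤ β + σA * ω := by
      have : t A A * p + σA * p ≤ β + σA * ω := by linarith
      linarith [this]
    apply helper_div (t A A + σA) _ _ (by linarith [hd0 A, hσA0])
    have h6 : 0 ≤ η * ((t A A + σA) - ((n:ℝ)-1)*m) :=
      mul_nonneg hη0 (by linarith [hdlo A, hσA0])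
    have h7 : 0 ≤ ω * (t A A) := mul_nonneg hω0 (le_of_lt (hd0 A))
    linarith [h5, h6, h7, hηβ]
  have hL2 : -q ≤ η + ω := by
    have h1 : -β ≤ t B B * q + σB * p := by
      have h2 := hrow B
      have h3 := hSp B
      have h4 := (abs_le.mp (hb B)).1
      rw [← hσBdef] at h3
      linarith
    have hp' : σB * p = σB * q + σB * ω := by rw [hωdef]; ring
    have h5 : -(β + σB * ω) ≤ (t B B + σB) * q := by
      have : -β - σB * ω ≤ t B B * q + σB * q := by linarith
      linarith [this]
    have hX : (0:ℝ) < t B B + σB := by linarith [hd0 B, hσB0]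
    apply helper_div (t B B + σB) _ _ hX
    have h6 : 0 ≤ η * ((t B B + σB) - ((n:ℝ)-1)*m) :=
      mul_nonneg hη0 (by linarith [hdlo B, hσB0])
    have h7 : 0 ≤ ω * (t B B) := mul_nonneg hω0 (le_of_lt (hd0 B))
    linarith [h5, h6, h7, hηβ]
  -- weight functions
  set u : Fin n → ℝ := fun j => if j = A then 0 else t A j / t A A with hudef
  set v : Fin n → ℝ := fun j => if j = B then 0 else t B j / t B B with hvdef
  set r : Fin n → ℝ := fun j => if j = A ∨ j = B then 0 else min (u j) (v j) with hrdef
  have hu0 : ∀ j, 0 ≤ u j := by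
    intro j
    by_cases h : j = A
    · simp [hudef, h]
    · simp only [hudef, if_neg h]
      exact div_nonneg (le_of_lt (lt_of_lt_of_le hm (hlo A j (fun hh => h hh.symm)))) (le_of_lt (hd0 A))
  have hv0 : ∀ j, 0 ≤ v j := by
    intro j
    by_cases h : j = B
    · simp [hvdef, h]
    · simp only [hvdef, if_neg h]
      exact div_nonneg (le_of_lt (lt_of_lt_of_le hm (hlo B j (fun hh => h hh.symm)))) (le_of_lt (hd0 B))
  have hr0 : ∀ j, 0 ≤ r j := by
    intro j
    by_cases h : j = A ∨ j = B
    · simp [hrdef, h]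
    · simp only [hrdef, if_neg h]
      exact le_min (hu0 j) (hv0 j)
  have hru : ∀ j, r j ≤ u j := by
    intro j
    by_cases h : j = A ∨ j = B
    · simp only [hrdef, if_pos h]; exact hu0 j
    · simp only [hrdef, if_neg h]; exact min_le_left _ _
  have hrv : ∀ j, r j ≤ v j := by
    intro j
    by_cases h : j = A ∨ j = B
    · simp only [hrdef, if_pos h]; exact hv0 j
    · simp only [hrdef, if_neg h]; exact min_le_right _ _
  -- identities
  have husum : ∀ (g : Fin n → ℝ), ∑ j, u j * g j = (∑ j ∈ Finset.univ.erase A, t A j * g j) / t A A := by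
    intro g
    rw [← Finset.sum_erase (Finset.univ) (a := A) (by simp [hudef])]
    rw [Finset.sum_div]
    apply Finset.sum_congr rfl
    intro j hj
    have hjA : j ≠ A := Finset.ne_of_mem_erase hj
    simp only [hudef, if_neg hjA]
    ring
  have hvsum : ∀ (g : Fin n → ℝ), ∑ j, v j * g j = (∑ j ∈ Finset.univ.erase B, t B j * g j) / t B B := by
    intro g
    rw [← Finset.sum_erase (Finset.univ) (a := B) (by simp [hvdef])]
    rw [Finset.sum_div]
    apply Finset.sum_congr rfl
    intro j hj
    have hjB : j ≠ B := Finset.ne_of_mem_erase hj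
    simp only [hvdef, if_neg hjB]
    ring
  have hIA : p + ∑ j, u j * x j = b A / t A A := by
    rw [husum x]
    have h2 := hrow A
    rw [eq_div_iff (ne_of_gt (hd0 A)), add_mul, div_mul_cancel₀ _ (ne_of_gt (hd0 A))]
    linear_combination h2
  have hIB : q + ∑ j, v j * x j = b B / t B B := by
    rw [hvsum x]
    have h2 := hrow B
    rw [eq_div_iff (ne_of_gt (hd0 B)), add_mul, div_mul_cancel₀ _ (ne_of_gt (hd0 B))]
    linear_combination h2
  have hU : ∑ j, u j = σA / t A A := by
    have := husum (fun _ => 1)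
    simpa [hσAdef] using this
  have hV : ∑ j, v j = σB / t B B := by
    have := hvsum (fun _ => 1)
    simpa [hσBdef] using this
  have hU1 : ∑ j, u j ≤ 1 := by
    rw [hU, div_le_one (hd0 A)]
    rw [hσAdef]; exact hdom A
  have hV1 : ∑ j, v j ≤ 1 := by
    rw [hV, div_le_one (hd0 B)]
    rw [hσBdef]; exact hdom B
  have hU0 : 0 ≤ ∑ j, u j := Finset.sum_nonneg (fun j _ => hu0 j)
  have hV0 : 0 ≤ ∑ j, v j := Finset.sum_nonneg (fun j _ => hv0 j)
  -- oscillation inequality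
  have habsA : b A / t A A ≤ η := by
    rw [hηdef]
    exact div_le_div₀ hβ0 ((abs_le.mp (hb A)).2) hnm (hdlo A)
  have habsB : -η ≤ b B / t B B := by
    have : -(b B) / t B B ≤ η := by
      rw [hηdef]
      exact div_le_div₀ hβ0 (by linarith [(abs_le.mp (hb B)).1]) hnm (hdlo B)
    have := this
    rw [neg_div] at this
    linarith
  have step1 : ∑ j, (v j - r j) * x j ≤ (∑ j, (v j - r j)) * p := by
    rw [Finset.sum_mul]
    apply Finset.sum_le_sum
    intro j _
    exact mul_le_mul_of_nonneg_left (hA' j) (by linarith [hrv j])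
  have step2 : (∑ j, (u j - r j)) * q ≤ ∑ j, (u j - r j) * x j := by
    rw [Finset.sum_mul]
    apply Finset.sum_le_sum
    intro j _
    exact mul_le_mul_of_nonneg_left (hB' j) (by linarith [hru j])
  have hsplit : ∑ j, v j * x j - ∑ j, u j * x j =
      (∑ j, (v j - r j) * x j) - (∑ j, (u j - r j) * x j) := by
    rw [← Finset.sum_sub_distrib, ← Finset.sum_sub_distrib]
    apply Finset.sum_congr rfl
    intro j _
    ring
  have hsums : (∑ j, (v j - r j)) = (∑ j, v j) - (∑ j, r j) := Finset.sum_sub_distrib _ _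
  have hsums2 : (∑ j, (u j - r j)) = (∑ j, u j) - (∑ j, r j) := Finset.sum_sub_distrib _ _
  have hosc : ω ≤ 2*η + ((∑ j, v j) - (∑ j, r j))*p - ((∑ j, u j) - (∑ j, r j))*q := by
    have hωeq : ω = b A / t A A - b B / t B B + (∑ j, v j * x j - ∑ j, u j * x j) := by
      rw [hωdef]
      linarith [hIA, hIB]
    rw [hωeq, hsplit]
    rw [← hsums, ← hsums2]
    linarith [step1, step2, habsA, habsB]
  -- key bound : R * ω ≤ 3 η
  have hkey : (∑ j, r j) * ω ≤ 3 * η := by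
    have hbase : (∑ j, r j) * ω ≤ 2*η + ((∑ j, v j) - 1)*p + (1 - (∑ j, u j))*q := by
      have hexp : ((∑ j, v j) - (∑ j, r j))*p - ((∑ j, u j) - (∑ j, r j))*q =
          (∑ j, v j)*p - (∑ j, u j)*q - (∑ j, r j)*ω := by rw [hωdef]; ring
      have hexp2 : ((∑ j, v j) - 1)*p + (1 - (∑ j, u j))*q =
          (∑ j, v j)*p - (∑ j, u j)*q - ω := by rw [hωdef]; ring
      linarith [hosc, hexp, hexp2]
    rcases le_or_gt q 0 with hq | hq
    · rcases le_or_gt 0 p with hp | hp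
      · linarith [hbase, mul_nonneg (sub_nonneg.mpr hV1) hp,
          mul_nonneg (sub_nonneg.mpr hU1) (neg_nonneg.mpr hq)]
      · -- p < 0 : -p ≤ η
        have hnegp : (0:ℝ) ≤ -p := by linarith
        have hL4 : -p ≤ η := by
          have h1 : b A ≤ t A A * p + σA * p := by
            have h2 := hrow A
            have h3 := hSp A
            rw [← hσAdef] at h3
            linarith
          have h4 := (abs_le.mp (hb A)).1
          have h6 : 0 ≤ (t A A - ((n:ℝ)-1)*m) * (-p) :=
            mul_nonneg (by linarith [hdlo A]) hnegp
          have h7 : 0 ≤ (σA - ((n:ℝ)-1)*m) * (-p) :=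
            mul_nonneg (by linarith [hσlo A]) hnegp
          have h8 : (((n:ℝ)-1)*m) * (-p) + (((n:ℝ)-1)*m) * (-p) ≤ β := by linarith [h1, h4, h6, h7]
          apply helper_div (((n:ℝ)-1)*m) _ _ hnm
          linarith [h8, hηβ, mul_nonneg (le_of_lt hnm) hnegp]
        have hc1 : 0 ≤ (1 - (∑ j, u j)) * (-q) :=
          mul_nonneg (by linarith [hU1]) (by linarith)
        have hc2 : ((∑ j, v j) - 1) * p ≤ 1 * (-p) := by
          have : ((∑ j, v j) - 1) * p = (1 - (∑ j, v j)) * (-p) := by ring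
          rw [this]
          exact mul_le_mul_of_nonneg_right (by linarith [hV0]) hnegp
        linarith [hbase, hc1, hc2, hL4]
    · -- q > 0 : q ≤ η
      have hq0 : (0:ℝ) ≤ q := le_of_lt hq
      have hL3 : q ≤ η := by
        have h1 : t B B * q + σB * q ≤ b B := by
          have h2 := hrow B
          have h3 := hSq B
          rw [← hσBdef] at h3
          linarith
        have h4 := (abs_le.mp (hb B)).2
        have h6 : 0 ≤ (t B B - ((n:ℝ)-1)*m) * q :=
          mul_nonneg (by linarith [hdlo B]) hq0
        have h7 : 0 ≤ (σB - ((n:ℝ)-1)*m) * q :=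
          mul_nonneg (by linarith [hσlo B]) hq0
        have h8 : (((n:ℝ)-1)*m) * q + (((n:ℝ)-1)*m) * q ≤ β := by linarith [h1, h4, h6, h7]
        apply helper_div (((n:ℝ)-1)*m) _ _ hnm
        linarith [h8, hηβ, mul_nonneg (le_of_lt hnm) hq0]
      have hc1 : ((∑ j, v j) - 1) * p ≤ 0 := by
        have hp0 : (0:ℝ) ≤ p := le_trans hq0 hpq
        exact mul_nonpos_of_nonpos_of_nonneg (by linarith [hV1]) hp0
      have hc2 : (1 - (∑ j, u j)) * q ≤ 1 * q :=
        mul_le_mul_of_nonneg_right (by linarith [hU0]) hq0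
      linarith [hbase, hc1, hc2, hL3]
  -- lower bound on R
  have hrlb : ((n:ℝ)-2) * (m/((n:ℝ)*M)) ≤ ∑ j, r j := by
    have hsub : ∑ j ∈ (Finset.univ.erase A).erase B, r j ≤ ∑ j, r j := by
      apply Finset.sum_le_sum_of_subset_of_nonneg (Finset.subset_univ _)
      intro j _ _
      exact hr0 j
    have hmem : ∀ j ∈ (Finset.univ.erase A).erase B, m/((n:ℝ)*M) ≤ r j := by
      intro j hj
      have hjB : j ≠ B := Finset.ne_of_mem_erase hj
      have hjA : j ≠ A := Finset.ne_of_mem_erase (Finset.mem_of_mem_erase hj)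
      have hnot : ¬(j = A ∨ j = B) := by tauto
      simp only [hrdef, if_neg hnot]
      apply le_min
      · simp only [hudef, if_neg hjA]
        exact div_le_div₀ (le_of_lt (lt_of_lt_of_le hm (hlo A j (fun hh => hjA hh.symm))))
          (hlo A j (fun hh => hjA hh.symm)) (hd0 A) (hdhi A)
      · simp only [hvdef, if_neg hjB]
        exact div_le_div₀ (le_of_lt (lt_of_lt_of_le hm (hlo B j (fun hh => hjB hh.symm))))
          (hlo B j (fun hh => hjB hh.symm)) (hd0 B) (hdhi B)
    have hcs : ((Finset.univ.erase A).erase B).card • (m/((n:ℝ)*M)) ≤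
        ∑ j ∈ (Finset.univ.erase A).erase B, r j :=
      Finset.card_nsmul_le_sum _ _ _ hmem
    rw [nsmul_eq_mul] at hcs
    have hcardS : ((n:ℝ)-2) ≤ (((Finset.univ.erase A).erase B).card : ℝ) := by
      have h1 : n - 2 ≤ ((Finset.univ.erase A).erase B).card := by
        have h2 : (Finset.univ.erase A).card - 1 ≤ ((Finset.univ.erase A).erase B).card :=
          Finset.pred_card_le_card_erase
        have h3 : (Finset.univ.erase A).card = n - 1 := by
          rw [Finset.card_erase_of_mem (Finset.mem_univ A), Finset.card_univ, Fintype.card_fin]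
        omega
      have h2 : ((n - 2 : ℕ) : ℝ) ≤ (((Finset.univ.erase A).erase B).card : ℝ) := by exact_mod_cast h1
      have h3 : ((n - 2 : ℕ) : ℝ) = (n:ℝ) - 2 := by
        have : 2 ≤ n := by omega
        push_cast [Nat.cast_sub this]
        ring
      linarith
    have hq0' : 0 ≤ m/((n:ℝ)*M) := by positivity
    have := mul_le_mul_of_nonneg_right hcardS hq0'
    linarith [hsub, hcs]
  -- conclude oscillation bound
  have hcpos : 0 < ((n:ℝ)-2) * (m/((n:ℝ)*M)) := by
    apply mul_pos (by linarith)
    positivity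
  have hoscb : ω ≤ 3*η*((n:ℝ)*M)/(((n:ℝ)-2)*m) := by
    have h1 : (((n:ℝ)-2) * (m/((n:ℝ)*M))) * ω ≤ 3 * η := by
      calc (((n:ℝ)-2) * (m/((n:ℝ)*M))) * ω ≤ (∑ j, r j) * ω := by
            exact mul_le_mul_of_nonneg_right hrlb hω0
      _ ≤ 3 * η := hkey
    rw [le_div_iff₀ (by positivity : (0:ℝ) < ((n:ℝ)-2)*m)]
    have hid : (((n:ℝ)-2) * (m/((n:ℝ)*M))) * ((n:ℝ)*M) = ((n:ℝ)-2)*m := by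
      field_simp
    have hnM0 : (0:ℝ) < (n:ℝ)*M := by positivity
    have h2 := mul_le_mul_of_nonneg_right h1 (le_of_lt hnM0)
    have h3 : ω * (((n:ℝ)-2)*m) = ((((n:ℝ)-2) * (m/((n:ℝ)*M))) * ω) * ((n:ℝ)*M) := by
      linear_combination (-ω) * hid
    rw [h3]
    exact h2
  -- final
  intro i
  rw [abs_le]
  constructor
  · have h1 : q ≤ x i := hB' i
    have h2 : -q ≤ η + ω := hL2
    have h3 : ω ≤ 3*η*((n:ℝ)*M)/(((n:ℝ)-2)*m) := hoscb
    linarith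
  · have h1 : x i ≤ p := hA' i
    have h2 : p ≤ η + ω := hL1
    linarith [hoscb]

set_option maxHeartbeats 2000000 in
theorem stmt_1 (T : (n : ℕ) → Matrix (Fin n) (Fin n) ℝ)
    (m M : ℕ → ℝ) (Δ : (n : ℕ) → Fin n → ℝ)
    (hinv : ∀ n, 2 ≤ n → IsUnit (T n).det)
    (hpos : ∀ n, 2 ≤ n → ∀ i j, 0 < T n i j)
    (hdom : ∀ n, 2 ≤ n → ∀ i, ∑ j ∈ Finset.univ.erase i, T n i j ≤ T n i i)
    (hΔ : ∀ n, ∀ i : Fin n, Δ n i = T n i i - ∑ j ∈ Finset.univ.erase i, T n i j)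
    (hm1 : ∀ n, 2 ≤ n → ∀ i j : Fin n, i ≠ j → m n ≤ T n i j)
    (hm2 : ∀ n, 2 ≤ n → ∃ i j : Fin n, i ≠ j ∧ T n i j = m n)
    (hM1 : ∀ n, 2 ≤ n → ∀ i j : Fin n, i ≠ j → T n i j ≤ M n)
    (hM2 : ∀ n, 2 ≤ n → ∀ i : Fin n, Δ n i ≤ M n)
    (hM3 : ∀ n, 2 ≤ n →
      ((∃ i j : Fin n, i ≠ j ∧ T n i j = M n) ∨ (∃ i : Fin n, Δ n i = M n)))
    (hlim : Filter.Tendsto (fun n : ℕ => M n / (m n * (n : ℝ))) Filter.atTop (nhds 0)) :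
    ∃ K : ℝ, 0 < K ∧ ∃ N : ℕ, ∀ n, N ≤ n → ∀ i j : Fin n,
      |((T n)⁻¹ - Matrix.diagonal fun k => (T n k k)⁻¹) i j| ≤
        K * (M n) ^ 2 / ((m n) ^ 3 * (n : ℝ) ^ 2) := by
  refine ⟨28, by norm_num, 4, ?_⟩
  intro n hn i j
  have h2n : 2 ≤ n := by omega
  obtain ⟨a0, b0, hab, habm⟩ := hm2 n h2n
  have hm0 : 0 < m n := habm ▸ hpos n h2n a0 b0
  have hmM : m n ≤ M n := habm ▸ hM1 n h2n a0 b0 hab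
  have hM0 : 0 < M n := lt_of_lt_of_le hm0 hmM
  have hn4 : (4:ℝ) ≤ (n:ℝ) := by exact_mod_cast hn
  have hup : ∀ i : Fin n, T n i i ≤ (∑ k ∈ Finset.univ.erase i, T n i k) + M n := by
    intro i
    have h1 := hΔ n i
    have h2 := hM2 n h2n i
    linarith
  -- diagonal lower bound
  have hcard : ∀ i : Fin n, ((Finset.univ.erase i).card : ℝ) = (n:ℝ) - 1 := by
    intro i
    rw [Finset.card_erase_of_mem (Finset.mem_univ i), Finset.card_univ, Fintype.card_fin]
    have : 1 ≤ n := by omega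
    push_cast [Nat.cast_sub this]
    ring
  have hnm : (0:ℝ) < ((n:ℝ)-1) * m n := by
    apply mul_pos (by linarith) hm0
  have hdlo : ∀ i : Fin n, ((n:ℝ)-1) * m n ≤ T n i i := by
    intro i
    have h1 : (Finset.univ.erase i).card • m n ≤ ∑ k ∈ Finset.univ.erase i, T n i k := by
      apply Finset.card_nsmul_le_sum
      intro k hk
      exact hm1 n h2n i k (Finset.ne_of_mem_erase hk).symm
    rw [nsmul_eq_mul, hcard] at h1
    exact le_trans h1 (hdom n h2n i)
  have hd0 : ∀ i : Fin n, 0 < T n i i := fun i => lt_of_lt_of_le hnm (hdlo i)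
  -- the vector and rhs
  set β : ℝ := M n / (((n:ℝ)-1) * m n) with hβdef
  have hβ0 : 0 ≤ β := le_of_lt (div_pos hM0 hnm)
  set x : Fin n → ℝ := fun k => ((T n)⁻¹ - Matrix.diagonal fun l => (T n l l)⁻¹) k j with hxdef
  set b : Fin n → ℝ := fun i' => (if i' = j then (1:ℝ) else 0) - T n i' j * (T n j j)⁻¹ with hbdef
  have heq : ∀ i', ∑ k, T n i' k * x k = b i' := by
    intro i'
    have hTT : (T n) * (T n)⁻¹ = 1 := Matrix.mul_nonsing_inv _ (hinv n h2n)
    have h1 : ∑ k, T n i' k * (T n)⁻¹ k j = (if i' = j then (1:ℝ) else 0) := by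
      have := congrFun (congrFun hTT i') j
      rw [Matrix.mul_apply] at this
      rw [this, Matrix.one_apply]
    have h2 : ∑ k, T n i' k * (Matrix.diagonal fun l => (T n l l)⁻¹) k j
        = T n i' j * (T n j j)⁻¹ := by
      have : ∀ k, T n i' k * (Matrix.diagonal fun l => (T n l l)⁻¹) k j
          = if k = j then T n i' k * (T n k k)⁻¹ else 0 := by
        intro k
        by_cases hk : k = j
        · subst hk; simp [Matrix.diagonal_apply_eq]
        · simp [Matrix.diagonal_apply_ne _ hk, hk]
      rw [Finset.sum_congr rfl (fun k _ => this k)]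
      simp
    calc ∑ k, T n i' k * x k
        = ∑ k, (T n i' k * (T n)⁻¹ k j - T n i' k * (Matrix.diagonal fun l => (T n l l)⁻¹) k j) := by
          apply Finset.sum_congr rfl
          intro k _
          simp only [hxdef, Matrix.sub_apply]
          ring
      _ = (∑ k, T n i' k * (T n)⁻¹ k j) - ∑ k, T n i' k * (Matrix.diagonal fun l => (T n l l)⁻¹) k j :=
          Finset.sum_sub_distrib _ _
      _ = b i' := by rw [h1, h2]
  have hb : ∀ i', |b i'| ≤ β := by
    intro i'
    by_cases hij : i' = j
    · subst hij
      have : b i' = 0 := by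
        show (if i' = i' then (1:ℝ) else 0) - T n i' i' * (T n i' i')⁻¹ = 0
        rw [if_pos rfl, mul_inv_cancel₀ (ne_of_gt (hd0 i'))]
        ring
      rw [this, abs_zero]
      exact hβ0
    · have : b i' = -(T n i' j * (T n j j)⁻¹) := by
        simp only [hbdef, if_neg hij]
        ring
      rw [this, abs_neg, ← div_eq_mul_inv,
        abs_of_nonneg (div_nonneg (le_of_lt (hpos n h2n i' j)) (le_of_lt (hd0 j)))]
      exact div_le_div₀ (le_of_lt hM0) (hM1 n h2n i' j hij) hnm (hdlo j)
  have hcore := core_bound n hn (T n) (m n) (M n) β hm0 hmM hβ0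
    (fun i j h => hm1 n h2n i j h) (fun i j h => hM1 n h2n i j h) (hdom n h2n) hup
    x b heq hb i
  -- final arithmetic
  have hxi : |x i| ≤ β/(((n:ℝ)-1)*m n) + 3*(β/(((n:ℝ)-1)*m n))*((n:ℝ)*M n)/(((n:ℝ)-2)*m n) := hcore
  have hgoal : |x i| ≤ 28 * (M n)^2 / ((m n)^3 * (n:ℝ)^2) := by
    set N : ℝ := (n:ℝ) with hNdef
    set mm : ℝ := m n
    set MM : ℝ := M n
    have hβη : β/((N-1)*mm) = MM / (((N-1)*mm)*((N-1)*mm)) := by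
      rw [hβdef, div_div]
    have hden1 : (0:ℝ) < ((N-1)*mm)*((N-1)*mm) := mul_pos hnm hnm
    have hden2 : (0:ℝ) < (N-2)*mm := mul_pos (by linarith) hm0
    have hN2 : (0:ℝ) < mm^3 * N^2 := by positivity
    have e1 : MM / (((N-1)*mm)*((N-1)*mm)) ≤ 4 * MM^2 / (mm^3 * N^2) := by
      rw [div_le_div_iff₀ hden1 hN2]
      have hNN : N^2 ≤ 4*(N-1)^2 := by nlinarith
      have hchain : mm*N^2 ≤ 4*MM*(N-1)^2 := by nlinarith [sq_nonneg (N-1)]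
      have hmul := mul_le_mul_of_nonneg_left hchain
        (mul_nonneg (mul_nonneg (le_of_lt hM0) (le_of_lt hm0)) (le_of_lt hm0))
      nlinarith [hmul]
    have e2 : 3*(MM / (((N-1)*mm)*((N-1)*mm)))*(N*MM)/((N-2)*mm)
        ≤ 24 * MM^2 / (mm^3 * N^2) := by
      have hLHS : 3*(MM / (((N-1)*mm)*((N-1)*mm)))*(N*MM)/((N-2)*mm)
          = (3*N*MM^2) / ((((N-1)*mm)*((N-1)*mm))*((N-2)*mm)) := by
        field_simp
      rw [hLHS, div_le_div_iff₀ (mul_pos hden1 hden2) hN2]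
      have hN3 : N^3 ≤ 8*((N-1)^2*(N-2)) := by
        nlinarith [mul_nonneg (by linarith : (0:ℝ) ≤ N - 4) (by nlinarith : (0:ℝ) ≤ 7*N^2 - 4*N)]
      have hchain : 3*N*N^2 ≤ 24*((N-1)^2*(N-2)) := by nlinarith
      have hmul := mul_le_mul_of_nonneg_left hchain
        (by positivity : (0:ℝ) ≤ MM^2 * mm^3)
      nlinarith [hmul]
    have hsum : 4 * MM^2 / (mm^3 * N^2) + 24 * MM^2 / (mm^3 * N^2)
        = 28 * MM^2 / (mm^3 * N^2) := by ring
    calc |x i| ≤ β/((N-1)*mm) + 3*(β/((N-1)*mm))*(N*MM)/((N-2)*mm) := hxi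
      _ = MM / (((N-1)*mm)*((N-1)*mm))
          + 3*(MM / (((N-1)*mm)*((N-1)*mm)))*(N*MM)/((N-2)*mm) := by rw [hβη]
      _ ≤ 4 * MM^2 / (mm^3 * N^2) + 24 * MM^2 / (mm^3 * N^2) := add_le_add e1 e2
      _ = 28 * MM^2 / (mm^3 * N^2) := hsum
  exact hgoal
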